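/- arXiv:1210.5771 — 3 statements merged into one kernel-verified Lean document; each statement's English description precedes it below -/
import Mathlib

section
/- Suppose η : [0,T] → ℝ solves the Riccati equation η' = −𝔟_t η² − 2𝔞_t η + 𝔪_t with η(T) = 𝔮, and χ : [0,T] → ℝ solves χ' + (𝔞_t + 𝔟_t η_t)χ = 𝔡_t − 𝔠_t η_t with χ(T) = 𝔯, where all coefficient functions are continuous. If (x_t, y_t, z_t) solves the FBSDE dx_t = (𝔞_t x_t + 𝔟_t y_t + 𝔠_t)dt + σ dW_t with x_0 = x⁰ and y_t := η_t x_t + χ_t, z_t := σ η_t, then (y_t, z_t) satisfies dy_t = (𝔪_t x_t − 𝔞_t y_t + 𝔡_t)dt + z_t dW_t and y_T = 𝔮 x_T + 𝔯. -/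
open intervalIntegral

/-- If η solves the Riccati equation η' = −𝔟η² − 2𝔞η + 𝔪 with η(T) = 𝔮, χ solves
χ' + (𝔞+𝔟η)χ = 𝔡 − 𝔠η with χ(T) = 𝔯, and (pathwise) x solves the forward equation
dx_t = (𝔞x + 𝔟y + 𝔠)dt + σ dW_t with x_0 = x⁰ where y := ηx + χ, then y (with z := ση)
solves dy_t = (𝔪x − 𝔞y + 𝔡)dt + z_t dW_t and y_T = 𝔮 x_T + 𝔯.  Since z is deterministic
and of class C¹, the stochastic integral ∫₀ᵗ z dW is expressed pathwise by integration
by parts: ∫₀ᵗ z dW = z_t W_t − ∫₀ᵗ z'_s W_s ds (W_0 = 0), with z' = σ η'. -/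
theorem stmt8 (T σ q r x0 : ℝ) (hT : 0 < T) (hσ : 0 < σ)
    (𝔞 𝔟 𝔠 𝔪 𝔡 η χ : ℝ → ℝ)
    (h𝔞 : Continuous 𝔞) (h𝔟 : Continuous 𝔟) (h𝔠 : Continuous 𝔠)
    (h𝔪 : Continuous 𝔪) (h𝔡 : Continuous 𝔡)
    (hη : ∀ t ∈ Set.Icc (0:ℝ) T,
      HasDerivAt η (-𝔟 t * (η t) ^ 2 - 2 * 𝔞 t * η t + 𝔪 t) t)
    (hηT : η T = q)
    (hχ : ∀ t ∈ Set.Icc (0:ℝ) T,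
      HasDerivAt χ (𝔡 t - 𝔠 t * η t - (𝔞 t + 𝔟 t * η t) * χ t) t)
    (hχT : χ T = r)
    (W x : ℝ → ℝ) (hW : Continuous W) (hW0 : W 0 = 0) (hx : Continuous x)
    (hxeq : ∀ t ∈ Set.Icc (0:ℝ) T,
      x t = x0 + (∫ s in (0:ℝ)..t, (𝔞 s * x s + 𝔟 s * (η s * x s + χ s) + 𝔠 s)) + σ * W t)
    (y z : ℝ → ℝ)
    (hy : ∀ t, y t = η t * x t + χ t) (hz : ∀ t, z t = σ * η t) :
    (∀ t ∈ Set.Icc (0:ℝ) T,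
      y t = y 0 + (∫ s in (0:ℝ)..t, (𝔪 s * x s - 𝔞 s * y s + 𝔡 s)) +
        (z t * W t - ∫ s in (0:ℝ)..t,
          σ * (-𝔟 s * (η s) ^ 2 - 2 * 𝔞 s * η s + 𝔪 s) * W s)) ∧
    y T = q * x T + r := by
  -- notation
  set f : ℝ → ℝ := fun s => 𝔞 s * x s + 𝔟 s * (η s * x s + χ s) + 𝔠 s with hf
  set g : ℝ → ℝ := fun s => -𝔟 s * (η s) ^ 2 - 2 * 𝔞 s * η s + 𝔪 s with hg
  set A : ℝ → ℝ := fun t => ∫ s in (0:ℝ)..t, f s with hA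
  set G : ℝ → ℝ := fun t => η t * (x0 + A t) + χ t with hG
  -- continuity facts on Icc
  have hηc : ContinuousOn η (Set.Icc 0 T) := fun t ht =>
    (hη t ht).continuousAt.continuousWithinAt
  have hχc : ContinuousOn χ (Set.Icc 0 T) := fun t ht =>
    (hχ t ht).continuousAt.continuousWithinAt
  have hfc : ContinuousOn f (Set.Icc 0 T) := by
    apply ContinuousOn.add
    apply ContinuousOn.add
    · exact (h𝔞.continuousOn).mul hx.continuousOn
    · exact (h𝔟.continuousOn).mul ((hηc.mul hx.continuousOn).add hχc)
    · exact h𝔠.continuousOn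
  have hgc : ContinuousOn g (Set.Icc 0 T) := by
    apply ContinuousOn.add
    apply ContinuousOn.sub
    · exact (h𝔟.continuousOn.neg).mul (hηc.pow 2)
    · exact (continuousOn_const.mul h𝔞.continuousOn).mul hηc
    · exact h𝔪.continuousOn
  have hyc : ContinuousOn y (Set.Icc 0 T) := by
    have : ContinuousOn (fun t => η t * x t + χ t) (Set.Icc 0 T) :=
      (hηc.mul hx.continuousOn).add hχc
    exact this.congr (fun t _ => hy t)
  have hx0 : x 0 = x0 := by
    have := hxeq 0 ⟨le_refl 0, hT.le⟩
    simpa [hW0] using this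
  have hA0 : A 0 = 0 := by simp [hA]
  have hy0 : y 0 = η 0 * x0 + χ 0 := by rw [hy 0, hx0]
  constructor
  · intro t ht
    obtain ⟨ht0, htT⟩ := ht
    have hsubIcc : Set.Icc (0:ℝ) t ⊆ Set.Icc 0 T := Set.Icc_subset_Icc le_rfl htT
    have huIcc : Set.uIcc (0:ℝ) t = Set.Icc 0 t := Set.uIcc_of_le ht0
    have hsub' : Set.uIcc (0:ℝ) t ⊆ Set.Icc 0 T := by rw [huIcc]; exact hsubIcc
    -- interval integrabilities on [0, t]
    have hfint : IntervalIntegrable f MeasureTheory.volume 0 t :=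
      (hfc.mono hsub').intervalIntegrable
    have hGd' : ∀ s ∈ Set.Ioo (0:ℝ) t,
        HasDerivAt G (𝔪 s * x s - 𝔞 s * y s + 𝔡 s - σ * g s * W s) s := by
      intro s hs
      have hsIcc : s ∈ Set.Icc (0:ℝ) T := ⟨hs.1.le, hs.2.le.trans htT⟩
      have hsnhds : Set.Icc (0:ℝ) T ∈ nhds s :=
        Icc_mem_nhds hs.1 (lt_of_lt_of_le hs.2 htT)
      have hfints : IntervalIntegrable f MeasureTheory.volume 0 s :=
        (hfc.mono (by rw [Set.uIcc_of_le hs.1.le]; exact Set.Icc_subset_Icc le_rfl hsIcc.2)).intervalIntegrable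
      have hmeas : StronglyMeasurableAtFilter f (nhds s) MeasureTheory.volume :=
        AEStronglyMeasurable.stronglyMeasurableAtFilter_of_mem
          (hfc.aestronglyMeasurable measurableSet_Icc) hsnhds
      have hfcontAt : ContinuousAt f s := hfc.continuousAt hsnhds
      have hAd : HasDerivAt A (f s) s :=
        intervalIntegral.integral_hasDerivAt_right hfints hmeas hfcontAt
      have hGd := ((hη s hsIcc).mul ((hasDerivAt_const s x0).add hAd)).add (hχ s hsIcc)
      have hxs : x s = x0 + A s + σ * W s := hxeq s hsIcc
      have hxA : x0 + A s = x s - σ * W s := by linarith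
      convert hGd using 1
      · rfl
      · rfl
      · rfl
      rw [Pi.add_apply, hxA, hy s, hf, hg]
      ring
    -- continuity of G on [0, t]
    have hGc : ContinuousOn G (Set.Icc 0 t) := by
      have hAc : ContinuousOn A (Set.Icc 0 t) := by
        have := intervalIntegral.continuousOn_primitive_interval
          (μ := MeasureTheory.volume) (f := f) (a := (0:ℝ)) (b := t)
          (by rw [huIcc]; exact (hfc.mono hsubIcc).integrableOn_compact isCompact_Icc)
        rwa [huIcc] at this
      exact ((hηc.mono hsubIcc).mul (continuousOn_const.add hAc)).add (hχc.mono hsubIcc)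
    -- integrability of the derivative
    have hG'c : ContinuousOn (fun s => 𝔪 s * x s - 𝔞 s * y s + 𝔡 s - σ * g s * W s)
        (Set.Icc 0 T) := by
      apply ContinuousOn.sub
      · exact ((h𝔪.continuousOn.mul hx.continuousOn).sub
          (h𝔞.continuousOn.mul hyc)).add h𝔡.continuousOn
      · exact (continuousOn_const.mul hgc).mul hW.continuousOn
    have hG'int : IntervalIntegrable (fun s => 𝔪 s * x s - 𝔞 s * y s + 𝔡 s - σ * g s * W s)
        MeasureTheory.volume 0 t :=
      (hG'c.mono hsub').intervalIntegrable
    have hFTC : (∫ s in (0:ℝ)..t, (𝔪 s * x s - 𝔞 s * y s + 𝔡 s - σ * g s * W s))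
        = G t - G 0 :=
      intervalIntegral.integral_eq_sub_of_hasDerivAt_of_le ht0 hGc hGd' hG'int
    -- split the integral
    have hint1 : IntervalIntegrable (fun s => 𝔪 s * x s - 𝔞 s * y s + 𝔡 s)
        MeasureTheory.volume 0 t := by
      exact ((((h𝔪.continuousOn.mul hx.continuousOn).sub
          (h𝔞.continuousOn.mul hyc)).add h𝔡.continuousOn).mono hsub').intervalIntegrable
    have hint2 : IntervalIntegrable (fun s => σ * g s * W s) MeasureTheory.volume 0 t :=
      (((continuousOn_const.mul hgc).mul hW.continuousOn).mono hsub').intervalIntegrable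
    have hsplit : (∫ s in (0:ℝ)..t, (𝔪 s * x s - 𝔞 s * y s + 𝔡 s - σ * g s * W s))
        = (∫ s in (0:ℝ)..t, (𝔪 s * x s - 𝔞 s * y s + 𝔡 s))
          - ∫ s in (0:ℝ)..t, σ * g s * W s :=
      intervalIntegral.integral_sub hint1 hint2
    have hxt : x t = x0 + A t + σ * W t := hxeq t ⟨ht0, htT⟩
    have hG0 : G 0 = y 0 := by rw [hG]; simp only [hA0]; rw [hy0]; ring
    have hGt : G t = η t * (x0 + A t) + χ t := rfl
    have hykey : y t = G t + σ * η t * W t := by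
      rw [hy t, hGt, hxt]; ring
    have : G t = y 0 + ((∫ s in (0:ℝ)..t, (𝔪 s * x s - 𝔞 s * y s + 𝔡 s))
        - ∫ s in (0:ℝ)..t, σ * g s * W s) := by
      rw [← hsplit, hFTC, hG0]; ring
    rw [hykey, this, hz t]
    ring
  · rw [hy T, hηT, hχT]
end

section
/- In the simple MFG example, the process x_t = x⁰(1+𝔮(T−t))/(1+𝔮T) − 𝔯t/(1+𝔮T) + σ(1+𝔮(T−t))∫_0^t dW_s/(1+𝔮(T−s)), with y_t = (𝔮 x_t + 𝔯)/(1+𝔮(T−t)), satisfies dx_t = −y_t dt + σ dW_t, x_0 = x⁰, and y_T = 𝔮 x_T + 𝔯, where 𝔮 ≥ 0. -/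
open intervalIntegral

/-- In the simple MFG example, the explicit process
x_t = x⁰(1+𝔮(T−t))/(1+𝔮T) − 𝔯t/(1+𝔮T) + σ(1+𝔮(T−t))∫_0^t dW_s/(1+𝔮(T−s)),
with y_t = (𝔮x_t+𝔯)/(1+𝔮(T−t)), satisfies dx_t = −y_t dt + σ dW_t, x_0 = x⁰ and
y_T = 𝔮 x_T + 𝔯 (with 𝔮 ≥ 0).  The stochastic integral of the deterministic C¹
integrand is expressed pathwise by integration by parts (W_0 = 0):
∫_0^t dW_s/(1+𝔮(T−s)) = W_t/(1+𝔮(T−t)) − ∫_0^t 𝔮 W_s/(1+𝔮(T−s))² ds. -/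
theorem stmt12 (T σ q r x0 : ℝ) (hT : 0 < T) (hσ : 0 < σ) (hq : 0 ≤ q)
    (W : ℝ → ℝ) (hW : Continuous W) (hW0 : W 0 = 0) :
    let I : ℝ → ℝ := fun t =>
      W t / (1 + q * (T - t)) - ∫ s in (0:ℝ)..t, q / (1 + q * (T - s)) ^ 2 * W s
    let x : ℝ → ℝ := fun t =>
      x0 * (1 + q * (T - t)) / (1 + q * T) - r * t / (1 + q * T) +
        σ * (1 + q * (T - t)) * I t
    let y : ℝ → ℝ := fun t => (q * x t + r) / (1 + q * (T - t))
    x 0 = x0 ∧ y T = q * x T + r ∧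
      ∀ t ∈ Set.Icc (0:ℝ) T, x t = x0 - (∫ s in (0:ℝ)..t, y s) + σ * W t := by
  intro I x y
  have hP : (0:ℝ) < 1 + q * T := by positivity
  have hD : ∀ s : ℝ, s ≤ T → (0:ℝ) < 1 + q * (T - s) := by
    intro s hs
    have : 0 ≤ q * (T - s) := mul_nonneg hq (by linarith)
    linarith
  have hDcont : Continuous fun u : ℝ => 1 + q * (T - u) := by continuity
  have hPn : (1 + q * T) ≠ 0 := hP.ne'
  set f : ℝ → ℝ := fun s => q / (1 + q * (T - s)) ^ 2 * W s with hfdef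
  set J : ℝ → ℝ := fun t => ∫ s in (0:ℝ)..t, f s with hJdef
  have hfc : ∀ s : ℝ, s ≤ T → ContinuousAt f s := by
    intro s hs
    have hne : ((1 + q * (T - s)) ^ 2 : ℝ) ≠ 0 := pow_ne_zero _ (hD s hs).ne'
    exact (continuousAt_const.div ((hDcont.pow 2).continuousAt) hne).mul hW.continuousAt
  have hfm : Measurable f := by
    apply Measurable.mul _ hW.measurable
    exact Measurable.div measurable_const ((hDcont.pow 2).measurable)
  have hfint : ∀ t ∈ Set.Icc (0:ℝ) T, IntervalIntegrable f MeasureTheory.volume 0 t := by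
    intro t ht
    apply ContinuousOn.intervalIntegrable
    intro s hs
    rw [Set.uIcc_of_le ht.1] at hs
    exact (hfc s (le_trans hs.2 ht.2)).continuousWithinAt
  have hJd : ∀ t ∈ Set.Icc (0:ℝ) T, HasDerivAt J (f t) t := by
    intro t ht
    exact intervalIntegral.integral_hasDerivAt_right (hfint t ht)
      (hfm.stronglyMeasurable.stronglyMeasurableAtFilter) (hfc t ht.2)
  -- the drift part g
  set g : ℝ → ℝ := fun t =>
    x0 * (1 + q * (T - t)) / (1 + q * T) - r * t / (1 + q * T)
      - σ * ((1 + q * (T - t)) * J t) with hgdef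
  have hxg : ∀ t : ℝ, t ≤ T → x t = g t + σ * W t := by
    intro t ht
    have hDt : (1 + q * (T - t)) ≠ 0 := (hD t ht).ne'
    show x0 * (1 + q * (T - t)) / (1 + q * T) - r * t / (1 + q * T) +
        σ * (1 + q * (T - t)) * (W t / (1 + q * (T - t)) - J t) = _
    rw [hgdef]
    field_simp
    ring
  have hDd : ∀ t : ℝ, HasDerivAt (fun s => 1 + q * (T - s)) (-q) t := by
    intro t
    simpa using (((hasDerivAt_id t).const_sub T).const_mul q).const_add 1
  have hgd : ∀ t ∈ Set.Icc (0:ℝ) T, HasDerivAt g (-y t) t := by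
    intro t ht
    have hDt : (1 + q * (T - t)) ≠ 0 := (hD t ht.2).ne'
    have A := ((hDd t).const_mul x0).div_const (1 + q * T)
    have B := ((hasDerivAt_id t).const_mul r).div_const (1 + q * T)
    have C := (((hDd t).mul (hJd t ht)).const_mul σ)
    have hg' := (A.sub B).sub C
    have heq : x0 * -q / (1 + q * T) - r * 1 / (1 + q * T)
        - σ * (-q * J t + (1 + q * (T - t)) * f t) = -y t := by
      show _ = -((q * (x0 * (1 + q * (T - t)) / (1 + q * T) - r * t / (1 + q * T) +
        σ * (1 + q * (T - t)) * (W t / (1 + q * (T - t)) - J t)) + r) / (1 + q * (T - t)))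
      rw [hfdef]
      field_simp
      ring
    exact heq ▸ hg'
  have hJc : ∀ s ∈ Set.Icc (0:ℝ) T, ContinuousAt J s := fun s hs => (hJd s hs).continuousAt
  have hyc : ContinuousOn (fun s => -y s) (Set.Icc (0:ℝ) T) := by
    intro s hs
    apply ContinuousAt.continuousWithinAt
    have hDs : (1 + q * (T - s)) ≠ 0 := (hD s hs.2).ne'
    have hxc : ContinuousAt x s := by
      show ContinuousAt (fun u => x0 * (1 + q * (T - u)) / (1 + q * T) - r * u / (1 + q * T) +
        σ * (1 + q * (T - u)) * (W u / (1 + q * (T - u)) - J u)) s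
      have h1 : ContinuousAt (fun u : ℝ => 1 + q * (T - u)) s := hDcont.continuousAt
      exact (((h1.const_mul x0).div continuousAt_const hP.ne').sub
        (((continuousAt_id).const_mul r).div continuousAt_const hP.ne')).add
        (((h1.const_mul σ)).mul ((hW.continuousAt.div h1 hDs).sub (hJc s hs)))
    exact (((hxc.const_mul q).add continuousAt_const).div hDcont.continuousAt hDs).neg
  refine ⟨?_, ?_, ?_⟩
  · show x0 * (1 + q * (T - 0)) / (1 + q * T) - r * 0 / (1 + q * T) +
      σ * (1 + q * (T - 0)) * (W 0 / (1 + q * (T - 0)) - J 0) = x0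
    have : J 0 = 0 := intervalIntegral.integral_same
    rw [this, hW0]
    field_simp
    ring
  · show (q * x T + r) / (1 + q * (T - T)) = q * x T + r
    simp
  · intro t ht
    have huIcc : Set.uIcc (0:ℝ) t = Set.Icc 0 t := Set.uIcc_of_le ht.1
    have hsub : Set.Icc (0:ℝ) t ⊆ Set.Icc 0 T := Set.Icc_subset_Icc le_rfl ht.2
    have hint : IntervalIntegrable (fun s => -y s) MeasureTheory.volume 0 t := by
      apply ContinuousOn.intervalIntegrable
      rw [huIcc]
      exact hyc.mono hsub
    have key : ∫ s in (0:ℝ)..t, -y s = g t - g 0 :=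
      intervalIntegral.integral_eq_sub_of_hasDerivAt
        (fun s hs => hgd s (hsub (huIcc ▸ hs))) hint
    have hneg : ∫ s in (0:ℝ)..t, -y s = -∫ s in (0:ℝ)..t, y s := by
      simp [intervalIntegral.integral_neg]
    have hg0 : g 0 = x0 := by
      have : J 0 = 0 := intervalIntegral.integral_same
      rw [hgdef]
      simp only [this]
      field_simp
      ring
    rw [hxg t ht.2]
    rw [hneg] at key
    linarith [key]
end

section
/- Let u(t,x) = ∫_ℝ φ_{x,σ²(T−t)}(y) exp(−λσ^{-2}(y−Λ)^+) dy, where φ_{m,v} is the Gaussian density with mean m and variance v. Then v(t,x) := −σ² log u(t,x) satisfies 0 ≤ ∂_x v(t,x) ≤ λ for all t ∈ [0,T), x ∈ ℝ. -/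
open MeasureTheory

/-- Density of the Gaussian distribution with mean m and variance v. -/
noncomputable def gaussDensity (m v y : ℝ) : ℝ :=
  (Real.sqrt (2 * Real.pi * v))⁻¹ * Real.exp (-(y - m) ^ 2 / (2 * v))

lemma gaussDensity_pos {v : ℝ} (hv : 0 < v) (m y : ℝ) : 0 < gaussDensity m v y := by
  unfold gaussDensity
  have h2 : 0 < Real.sqrt (2 * Real.pi * v) := Real.sqrt_pos.2 (by positivity)
  positivity

lemma gaussDensity_integrable {v : ℝ} (hv : 0 < v) (m : ℝ) :
    Integrable (gaussDensity m v) := by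
  unfold gaussDensity
  apply Integrable.const_mul
  have h : Integrable (fun y : ℝ => Real.exp (-(1/(2*v)) * y^2)) :=
    integrable_exp_neg_mul_sq (by positivity)
  have h2 := h.comp_sub_right m
  convert h2 using 2 with y
  ring_nf

lemma deriv_nonneg_of_monotone {f : ℝ → ℝ} (hf : Monotone f) (x : ℝ) : 0 ≤ deriv f x := by
  by_cases hd : DifferentiableAt ℝ f x
  · have h := hd.hasDerivAt
    rw [hasDerivAt_iff_tendsto_slope] at h
    have h' := h.mono_left (nhdsWithin_mono x (fun y hy => ne_of_gt (Set.mem_Ioi.1 hy)))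
    refine ge_of_tendsto h' ?_
    filter_upwards [self_mem_nhdsWithin] with y hy
    rw [slope_def_field]
    exact div_nonneg (sub_nonneg.2 (hf (le_of_lt hy))) (sub_nonneg.2 (le_of_lt hy))
  · simp [deriv_zero_of_not_differentiableAt hd]

/-- With u(t,x) = ∫ φ_{x,σ²(T−t)}(y) e^{−λσ⁻²(y−Λ)⁺} dy and v = −σ² log u, one has
0 ≤ ∂_x v(t,x) ≤ λ for all t ∈ [0,T) and x ∈ ℝ. -/
theorem stmt15 (σ lam Λ T : ℝ) (hσ : 0 < σ) (hlam : 0 < lam) (hT : 0 < T) :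
    let u : ℝ → ℝ → ℝ := fun t x =>
      ∫ y : ℝ, gaussDensity x (σ ^ 2 * (T - t)) y * Real.exp (-(lam / σ ^ 2) * max (y - Λ) 0)
    let v : ℝ → ℝ → ℝ := fun t x => -σ ^ 2 * Real.log (u t x)
    ∀ t ∈ Set.Ico (0:ℝ) T, ∀ x : ℝ,
      0 ≤ deriv (fun x' => v t x') x ∧ deriv (fun x' => v t x') x ≤ lam := by
  intro u v t ht x
  obtain ⟨-, htT⟩ := ht
  set V := σ ^ 2 * (T - t) with hVdef
  have hVpos : 0 < V := by
    have := sub_pos.2 htT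
    rw [hVdef]; positivity
  set c := lam / σ ^ 2 with hcdef
  have hc : 0 < c := by rw [hcdef]; positivity
  set f : ℝ → ℝ := fun y => Real.exp (-c * max (y - Λ) 0) with hfdef
  have hfpos : ∀ y, 0 < f y := fun y => Real.exp_pos _
  have hfle1 : ∀ y, f y ≤ 1 := by
    intro y
    apply Real.exp_le_one_iff.2
    have h0 : (0:ℝ) ≤ max (y - Λ) 0 := le_max_right _ _
    nlinarith
  set g : ℝ → ℝ → ℝ := fun a z => gaussDensity 0 V z * f (z + a) with hgdef
  have hgcont : ∀ a, Continuous (g a) := by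
    intro a
    apply Continuous.mul
    · unfold gaussDensity; fun_prop
    · apply Real.continuous_exp.comp
      exact (continuous_const.mul (((continuous_id.add continuous_const).sub
        continuous_const).max continuous_const))
  have hgpos : ∀ a z, 0 < g a z := fun a z =>
    mul_pos (gaussDensity_pos hVpos 0 z) (hfpos _)
  have hgint : ∀ a, Integrable (g a) := by
    intro a
    apply Integrable.mono' (gaussDensity_integrable hVpos 0)
      (hgcont a).aestronglyMeasurable
    filter_upwards with z
    rw [Real.norm_eq_abs, abs_of_nonneg (hgpos a z).le]
    calc gaussDensity 0 V z * f (z + a) ≤ gaussDensity 0 V z * 1 :=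
          mul_le_mul_of_nonneg_left (hfle1 _) (gaussDensity_pos hVpos 0 z).le
      _ = gaussDensity 0 V z := mul_one _
  have hueq : ∀ a : ℝ, u t a = ∫ z, g a z := by
    intro a
    have hpt : ∀ y : ℝ, gaussDensity a V y * f y = g a (y - a) := by
      intro y
      simp only [hgdef, gaussDensity, sub_add_cancel, sub_zero]
    calc u t a = ∫ y, gaussDensity a V y * f y := by
          simp only [u, ← hVdef, ← hcdef, hfdef]
      _ = ∫ y, g a (y - a) := by simp only [hpt]
      _ = ∫ z, g a z := integral_sub_right_eq_self (g a) a
  have hupos : ∀ a : ℝ, 0 < u t a := by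
    intro a
    rw [hueq a]
    rw [integral_pos_iff_support_of_nonneg (fun z => (hgpos a z).le) (hgint a)]
    have hsupp : Function.support (g a) = Set.univ :=
      Set.eq_univ_of_forall fun z => (hgpos a z).ne'
    rw [hsupp]
    simp [Real.volume_univ]
  have hkey : ∀ a h : ℝ, 0 ≤ h →
      u t (a + h) ≤ u t a ∧ u t a ≤ Real.exp (c * h) * u t (a + h) := by
    intro a h hh
    constructor
    · rw [hueq, hueq]
      refine integral_mono (hgint _) (hgint _) fun z => ?_
      apply mul_le_mul_of_nonneg_left _ (gaussDensity_pos hVpos 0 z).le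
      apply Real.exp_le_exp.2
      have hmax : max (z + a - Λ) 0 ≤ max (z + (a + h) - Λ) 0 :=
        max_le_max (by linarith) le_rfl
      nlinarith
    · rw [hueq, hueq, ← integral_const_mul]
      refine integral_mono (hgint a) ((hgint (a + h)).const_mul _) fun z => ?_
      simp only [hgdef]
      rw [mul_comm (Real.exp (c * h)), mul_assoc]
      apply mul_le_mul_of_nonneg_left _ (gaussDensity_pos hVpos 0 z).le
      simp only [hfdef]
      rw [← Real.exp_add]
      apply Real.exp_le_exp.2
      have hmax : max (z + (a + h) - Λ) 0 ≤ max (z + a - Λ) 0 + h :=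
        max_le (by nlinarith [le_max_left (z + a - Λ) (0:ℝ)])
          (by nlinarith [le_max_right (z + a - Λ) (0:ℝ)])
      nlinarith
  have hvmono : Monotone (fun x' => v t x') := by
    intro a b hab
    have hub : u t b ≤ u t a := by
      have := (hkey a (b - a) (by linarith)).1
      rwa [add_sub_cancel] at this
    have hlog : Real.log (u t b) ≤ Real.log (u t a) :=
      Real.log_le_log (hupos b) hub
    simp only [v]
    nlinarith [sq_nonneg σ]
  have hvlip : ∀ a b : ℝ, a ≤ b → v t b - v t a ≤ lam * (b - a) := by
    intro a b hab
    have hle : u t a ≤ Real.exp (c * (b - a)) * u t b := by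
      have := (hkey a (b - a) (by linarith)).2
      rwa [add_sub_cancel] at this
    have hlog : Real.log (u t a) ≤ c * (b - a) + Real.log (u t b) := by
      calc Real.log (u t a) ≤ Real.log (Real.exp (c * (b - a)) * u t b) :=
            Real.log_le_log (hupos a) hle
        _ = c * (b - a) + Real.log (u t b) := by
            rw [Real.log_mul (Real.exp_ne_zero _) (hupos b).ne', Real.log_exp]
    have hσ2 : σ ^ 2 * c = lam := by
      rw [hcdef]; field_simp
    simp only [v]
    nlinarith
  refine ⟨deriv_nonneg_of_monotone hvmono x, ?_⟩
  have hlipall : ∀ᶠ x' in nhds x, ‖v t x' - v t x‖ ≤ lam * ‖x' - x‖ := by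
    filter_upwards with y
    rcases le_total x y with hxy | hyx
    · rw [Real.norm_eq_abs, Real.norm_eq_abs,
        abs_of_nonneg (sub_nonneg.2 (hvmono hxy)), abs_of_nonneg (sub_nonneg.2 hxy)]
      exact hvlip x y hxy
    · rw [Real.norm_eq_abs, Real.norm_eq_abs,
        abs_of_nonpos (sub_nonpos.2 (hvmono hyx)), abs_of_nonpos (sub_nonpos.2 hyx)]
      have := hvlip y x hyx
      linarith
  have := norm_deriv_le_of_lip' (f := fun x' => v t x') hlam.le hlipall
  calc deriv (fun x' => v t x') x ≤ ‖deriv (fun x' => v t x') x‖ := le_abs_self _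
    _ ≤ lam := this
end
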